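/- (Consistency of BBSE, Proposition 1, part 1) Assume the label shift assumption (A.1), p(y) > 0 for all y (A.2), and that the confusion matrix C is invertible (A.3). Then as n, m → ∞, the estimator ŵ (defined as Ĉ⁻¹ μ̂_ŷ whenever Ĉ is invertible, and arbitrarily otherwise) converges almost surely to w, where w_j = q(j)/p(j). -/

import Mathlib

open MeasureTheory ProbabilityTheory Filter Matrix

noncomputable section

set_option maxHeartbeats 1000000

/-- Population confusion matrix: `C i j = P (f⁻¹(i) × {j})`. -/
def confusion {X : Type*} [MeasurableSpace X] {k : ℕ}
    (P : Measure (X × Fin k)) (f : X → Fin k) : Matrix (Fin k) (Fin k) ℝ :=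
  fun i j => (P ((f ⁻¹' {i}) ×ˢ ({j} : Set (Fin k)))).toReal

/-- Empirical confusion matrix from `n` samples. -/
def empConfusion {X Ω : Type*} {k : ℕ}
    (f : X → Fin k) (Z : ℕ → Ω → X × Fin k) (n : ℕ) (ω : Ω) : Matrix (Fin k) (Fin k) ℝ :=
  fun i j => ((Finset.range n).filter (fun l => f (Z l ω).1 = i ∧ (Z l ω).2 = j)).card / n

/-- Empirical prediction frequencies on the target sample. -/
def empMu {X Ω : Type*} {k : ℕ} (f : X → Fin k) (Z' : ℕ → Ω → X) (m : ℕ) (ω : Ω) :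
    Fin k → ℝ :=
  fun i => ((Finset.range m).filter (fun l => f (Z' l ω) = i)).card / m

/-- The combined family of source samples (indexed by `Sum.inl`) and target samples
(indexed by `Sum.inr`), used to state mutual independence. -/
def pairFam {X Ω : Type*} {k : ℕ} (Z : ℕ → Ω → X × Fin k) (Z' : ℕ → Ω → X) :
    (s : ℕ ⊕ ℕ) → Ω → Sum.elim (fun _ : ℕ => X × Fin k) (fun _ : ℕ => X) s
  | .inl i => Z i
  | .inr j => Z' j

/-- The measurable-space structures on the codomains of `pairFam`. -/
def pairMS {X : Type*} [MeasurableSpace X] {k : ℕ} :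
    (s : ℕ ⊕ ℕ) → MeasurableSpace (Sum.elim (fun _ : ℕ => X × Fin k) (fun _ : ℕ => X) s)
  | .inl _ => (inferInstance : MeasurableSpace (X × Fin k))
  | .inr _ => (inferInstance : MeasurableSpace X)

/-- SLLN for empirical frequencies of an event under iid sampling. -/
lemma slln_freq {Ω E : Type*} [MeasurableSpace Ω] [MeasurableSpace E]
    (μ : Measure Ω) [IsProbabilityMeasure μ]
    (W : ℕ → Ω → E) (hmeas : ∀ l, Measurable (W l))
    (hlaw : ∀ l, μ.map (W l) = μ.map (W 0))
    (hind : Pairwise fun l l' => IndepFun (W l) (W l') μ)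
    (S : Set E) (hS : MeasurableSet S) [DecidablePred (· ∈ S)] :
    ∀ᵐ ω ∂μ, Tendsto
      (fun n : ℕ => (((Finset.range n).filter (fun l => W l ω ∈ S)).card : ℝ) / n) atTop
      (nhds ((μ.map (W 0)) S).toReal) := by
  set g : E → ℝ := S.indicator 1 with hg
  have hgmeas : Measurable g := (measurable_const.indicator hS)
  set Y : ℕ → Ω → ℝ := fun l ω => g (W l ω) with hY
  have hind0 : ∀ ω, Y 0 ω = ((W 0) ⁻¹' S).indicator (fun _ => (1:ℝ)) ω := by
    intro ω
    by_cases h : W 0 ω ∈ S <;>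
      simp [hY, hg, Set.indicator_apply, Set.mem_preimage, h]
  have hYint : Integrable (Y 0) μ := by
    have : Y 0 = ((W 0) ⁻¹' S).indicator (fun _ => (1:ℝ)) := funext hind0
    rw [this]
    exact (integrable_const (1:ℝ)).indicator ((hmeas 0) hS)
  have hYindep : Pairwise (Function.onFun (IndepFun · · μ) Y) :=
    fun l l' h => (hind h).comp hgmeas hgmeas
  have hYident : ∀ l, IdentDistrib (Y l) (Y 0) μ μ := fun l =>
    (IdentDistrib.mk (hmeas l).aemeasurable (hmeas 0).aemeasurable (hlaw l)).comp hgmeas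
  have hmean : μ[Y 0] = ((μ.map (W 0)) S).toReal := by
    rw [funext hind0, integral_indicator_const (1:ℝ) ((hmeas 0) hS),
      Measure.map_apply (hmeas 0) hS]
    simp [Measure.real]
  have h := strong_law_ae_real Y hYint hYindep hYident
  rw [hmean] at h
  filter_upwards [h] with ω hω
  have : (fun n : ℕ => (((Finset.range n).filter (fun l => W l ω ∈ S)).card : ℝ) / n)
      = fun n : ℕ => (∑ i ∈ Finset.range n, Y i ω) / n := by
    funext n
    congr 1
    rw [← Finset.sum_boole]
    congr 1
    funext l
    by_cases h : W l ω ∈ S <;> simp [hY, hg, Set.indicator_apply, h]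
  rw [this]
  exact hω

/-- Consistency of BBSE, part 1. Under label shift, positivity of the source
label marginal, and invertibility of the confusion matrix, any estimator that equals
`Ĉ⁻¹ μ̂_ŷ` whenever `Ĉ` is invertible converges almost surely to `w` as `n, m → ∞`. -/
theorem bbse_weights_consistent
    {X : Type*} [MeasurableSpace X] {k : ℕ} (hk : 1 ≤ k)
    (P Q : Measure (X × Fin k)) [IsProbabilityMeasure P] [IsProbabilityMeasure Q]
    (f : X → Fin k) (hf : Measurable f)
    (A1 : ∀ (y : Fin k) (A : Set X), MeasurableSet A →
      P (A ×ˢ ({y} : Set (Fin k))) * Q (Set.univ ×ˢ ({y} : Set (Fin k)))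
        = Q (A ×ˢ ({y} : Set (Fin k))) * P (Set.univ ×ˢ ({y} : Set (Fin k))))
    (A2 : ∀ y : Fin k, 0 < (P (Set.univ ×ˢ ({y} : Set (Fin k)))).toReal)
    (A3 : IsUnit (confusion P f).det)
    {Ω : Type*} [MeasurableSpace Ω] (μ : Measure Ω) [IsProbabilityMeasure μ]
    (Z : ℕ → Ω → X × Fin k) (Z' : ℕ → Ω → X)
    (hZmeas : ∀ l, Measurable (Z l)) (hZ'meas : ∀ l, Measurable (Z' l))
    (hZlaw : ∀ l, μ.map (Z l) = P) (hZ'law : ∀ l, μ.map (Z' l) = Q.map Prod.fst)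
    (hindep : iIndepFun (m := pairMS (X := X) (k := k)) (pairFam Z Z') μ)
    (West : ℕ → ℕ → Ω → Fin k → ℝ)
    (hWest : ∀ (n m : ℕ) (ω : Ω), IsUnit (empConfusion f Z n ω).det →
      West n m ω = (empConfusion f Z n ω)⁻¹ *ᵥ empMu f Z' m ω) :
    ∀ᵐ ω ∂μ, Tendsto (fun nm : ℕ × ℕ => West nm.1 nm.2 ω) atTop
      (nhds (fun j => (Q (Set.univ ×ˢ ({j} : Set (Fin k)))).toReal / (P (Set.univ ×ˢ ({j} : Set (Fin k)))).toReal)) := by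
  classical
  set C := confusion P f with hC
  set w : Fin k → ℝ := fun j => (Q (Set.univ ×ˢ ({j} : Set (Fin k)))).toReal /
      (P (Set.univ ×ˢ ({j} : Set (Fin k)))).toReal with hw
  set ν : Fin k → ℝ := fun i => (Q ((f ⁻¹' {i}) ×ˢ (Set.univ : Set (Fin k)))).toReal with hν
  have hdetC : C.det ≠ 0 := A3.ne_zero
  -- pairwise independence within each sample
  have hindZ : Pairwise fun l l' => IndepFun (Z l) (Z l') μ := fun l l' h =>
    hindep.indepFun (show (Sum.inl l : ℕ ⊕ ℕ) ≠ Sum.inl l' by simpa using h)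
  have hindZ' : Pairwise fun l l' => IndepFun (Z' l) (Z' l') μ := fun l l' h =>
    hindep.indepFun (show (Sum.inr l : ℕ ⊕ ℕ) ≠ Sum.inr l' by simpa using h)
  have hlawZ : ∀ l, μ.map (Z l) = μ.map (Z 0) := fun l => by rw [hZlaw l, hZlaw 0]
  have hlawZ' : ∀ l, μ.map (Z' l) = μ.map (Z' 0) := fun l => by rw [hZ'law l, hZ'law 0]
  -- SLLN for each confusion matrix entry
  have hSmeas : ∀ i j : Fin k, MeasurableSet ((f ⁻¹' {i}) ×ˢ ({j} : Set (Fin k))) :=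
    fun i j => (hf (measurableSet_singleton i)).prod (measurableSet_singleton j)
  have hCae : ∀ᵐ ω ∂μ, ∀ i j : Fin k,
      Tendsto (fun n : ℕ => empConfusion f Z n ω i j) atTop (nhds (C i j)) := by
    rw [ae_all_iff]; intro i; rw [ae_all_iff]; intro j
    have h := slln_freq μ Z hZmeas hlawZ hindZ ((f ⁻¹' {i}) ×ˢ ({j} : Set (Fin k)))
      (hSmeas i j)
    rw [hZlaw 0] at h
    filter_upwards [h] with ω hω
    have hfilt : ∀ n : ℕ, (Finset.range n).filter
          (fun l => f (Z l ω).1 = i ∧ (Z l ω).2 = j)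
        = (Finset.range n).filter (fun l => Z l ω ∈ (f ⁻¹' {i}) ×ˢ ({j} : Set (Fin k))) := by
      intro n
      apply Finset.filter_congr
      intro l _
      simp only [Set.mem_prod, Set.mem_preimage, Set.mem_singleton_iff]
    have : (fun n : ℕ => empConfusion f Z n ω i j)
        = fun n : ℕ => (((Finset.range n).filter
            (fun l => Z l ω ∈ (f ⁻¹' {i}) ×ˢ ({j} : Set (Fin k)))).card : ℝ) / n := by
      funext n
      simp only [empConfusion, hfilt n]
    rw [this]
    exact hω
  -- SLLN for the target frequencies
  have hμae : ∀ᵐ ω ∂μ, ∀ i : Fin k,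
      Tendsto (fun m : ℕ => empMu f Z' m ω i) atTop (nhds (ν i)) := by
    rw [ae_all_iff]; intro i
    have h := slln_freq μ Z' hZ'meas hlawZ' hindZ' (f ⁻¹' {i}) (hf (measurableSet_singleton i))
    rw [hZ'law 0] at h
    have hmap : (Q.map Prod.fst) (f ⁻¹' {i}) = Q ((f ⁻¹' {i}) ×ˢ (Set.univ : Set (Fin k))) := by
      rw [Measure.map_apply measurable_fst (hf (measurableSet_singleton i)), Set.prod_univ]
    rw [hmap] at h
    filter_upwards [h] with ω hω
    have hfilt : ∀ m : ℕ, (Finset.range m).filter (fun l => f (Z' l ω) = i)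
        = (Finset.range m).filter (fun l => Z' l ω ∈ f ⁻¹' {i}) := by
      intro m
      apply Finset.filter_congr
      intro l _
      simp only [Set.mem_preimage, Set.mem_singleton_iff]
    have : (fun m : ℕ => empMu f Z' m ω i)
        = fun m : ℕ => (((Finset.range m).filter (fun l => Z' l ω ∈ f ⁻¹' {i})).card : ℝ) / m := by
      funext m
      simp only [empMu, hfilt m]
    rw [this]
    exact hω
  -- the key algebraic identity : C *ᵥ w = ν
  have hkey : C *ᵥ w = ν := by
    funext i
    have hsum : Q ((f ⁻¹' {i}) ×ˢ (Set.univ : Set (Fin k)))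
        = ∑ j : Fin k, Q ((f ⁻¹' {i}) ×ˢ ({j} : Set (Fin k))) := by
      have : (f ⁻¹' {i}) ×ˢ (Set.univ : Set (Fin k))
          = ⋃ j : Fin k, (f ⁻¹' {i}) ×ˢ ({j} : Set (Fin k)) := by
        ext p
        simp only [Set.mem_prod, Set.mem_iUnion, Set.mem_singleton_iff, Set.mem_univ,
          and_true, Set.mem_preimage]
        exact ⟨fun h => ⟨p.2, h, rfl⟩, fun ⟨j, h, _⟩ => h⟩
      rw [this, measure_iUnion ?_ (fun j => (hf (measurableSet_singleton i)).prod
        (measurableSet_singleton j)), tsum_fintype]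
      intro j j' h
      simp only [Set.disjoint_left]
      rintro p ⟨-, hp⟩ ⟨-, hp'⟩
      exact h (hp.symm.trans hp')
    have hterm : ∀ j : Fin k, C i j * w j
        = (Q ((f ⁻¹' {i}) ×ˢ ({j} : Set (Fin k)))).toReal := by
      intro j
      have h1 := A1 j (f ⁻¹' {i}) (hf (measurableSet_singleton i))
      have h2 : (P ((f ⁻¹' {i}) ×ˢ ({j} : Set (Fin k)))).toReal
            * (Q (Set.univ ×ˢ ({j} : Set (Fin k)))).toReal
          = (Q ((f ⁻¹' {i}) ×ˢ ({j} : Set (Fin k)))).toReal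
            * (P (Set.univ ×ˢ ({j} : Set (Fin k)))).toReal := by
        rw [← ENNReal.toReal_mul, ← ENNReal.toReal_mul, h1]
      have hp := A2 j
      simp only [hC, hw, confusion]
      calc (P ((f ⁻¹' {i}) ×ˢ ({j} : Set (Fin k)))).toReal
            * ((Q (Set.univ ×ˢ ({j} : Set (Fin k)))).toReal
              / (P (Set.univ ×ˢ ({j} : Set (Fin k)))).toReal)
          = (P ((f ⁻¹' {i}) ×ˢ ({j} : Set (Fin k)))).toReal
            * (Q (Set.univ ×ˢ ({j} : Set (Fin k)))).toReal
              / (P (Set.univ ×ˢ ({j} : Set (Fin k)))).toReal := by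
            rw [mul_div_assoc]
        _ = (Q ((f ⁻¹' {i}) ×ˢ ({j} : Set (Fin k)))).toReal
            * (P (Set.univ ×ˢ ({j} : Set (Fin k)))).toReal
              / (P (Set.univ ×ˢ ({j} : Set (Fin k)))).toReal := by rw [h2]
        _ = (Q ((f ⁻¹' {i}) ×ˢ ({j} : Set (Fin k)))).toReal :=
            mul_div_cancel_right₀ _ (ne_of_gt hp)
    calc (C *ᵥ w) i = ∑ j : Fin k, C i j * w j := by
          simp [Matrix.mulVec, dotProduct]
      _ = ∑ j : Fin k, (Q ((f ⁻¹' {i}) ×ˢ ({j} : Set (Fin k)))).toReal := by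
          exact Finset.sum_congr rfl fun j _ => hterm j
      _ = ν i := by
          show _ = (Q ((f ⁻¹' {i}) ×ˢ (Set.univ : Set (Fin k)))).toReal
          rw [hsum, ENNReal.toReal_sum (fun j _ => measure_ne_top Q _)]
  -- continuity of (A, v) ↦ A⁻¹ *ᵥ v at (C, ν)
  have hinv : ContinuousAt Inv.inv C := by
    apply continuousAt_matrix_inv
    rw [Ring.inverse_eq_inv']
    exact continuousAt_inv₀ hdetC
  have hcont : ContinuousAt (fun p : Matrix (Fin k) (Fin k) ℝ × (Fin k → ℝ) => p.1⁻¹ *ᵥ p.2)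
      (C, ν) := by
    have h2 : Continuous (fun p : Matrix (Fin k) (Fin k) ℝ × (Fin k → ℝ) => p.1 *ᵥ p.2) :=
      continuous_fst.matrix_mulVec continuous_snd
    exact h2.continuousAt.comp ((hinv.comp continuousAt_fst).prodMk continuousAt_snd)
  have hfstT : Tendsto (Prod.fst : ℕ × ℕ → ℕ) atTop atTop := by
    rw [← prod_atTop_atTop_eq]; exact tendsto_fst
  have hsndT : Tendsto (Prod.snd : ℕ × ℕ → ℕ) atTop atTop := by
    rw [← prod_atTop_atTop_eq]; exact tendsto_snd
  -- combine
  filter_upwards [hCae, hμae] with ω hCω hμω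
  have hCten : Tendsto (fun n : ℕ => empConfusion f Z n ω) atTop (nhds C) := by
    refine tendsto_pi_nhds.2 ?_; intro i
    rw [tendsto_pi_nhds]; intro j
    exact hCω i j
  have hμten : Tendsto (fun m : ℕ => empMu f Z' m ω) atTop (nhds ν) := by
    rw [tendsto_pi_nhds]; exact hμω
  have hpair : Tendsto (fun nm : ℕ × ℕ => (empConfusion f Z nm.1 ω, empMu f Z' nm.2 ω))
      atTop (nhds (C, ν)) :=
    (hCten.comp hfstT).prodMk_nhds (hμten.comp hsndT)
  have htend := hcont.tendsto.comp hpair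
  simp only [Function.comp_def] at htend
  have hlim : C⁻¹ *ᵥ ν = w := by
    rw [← hkey, Matrix.mulVec_mulVec, Matrix.nonsing_inv_mul C A3, Matrix.one_mulVec]
  rw [hlim] at htend
  have hdet : Tendsto (fun n : ℕ => (empConfusion f Z n ω).det) atTop (nhds C.det) :=
    (Continuous.matrix_det continuous_id).continuousAt.tendsto.comp hCten
  have hev : ∀ᶠ n : ℕ in atTop, (empConfusion f Z n ω).det ≠ 0 := hdet.eventually_ne hdetC
  refine Tendsto.congr' ?_ htend
  filter_upwards [hfstT.eventually hev] with nm h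
  exact (hWest nm.1 nm.2 ω (isUnit_iff_ne_zero.2 h)).symm

end
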